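/- Let φ : (X, 𝓔^X, 𝓑^X, μ_X) → (Y, 𝓔^Y, 𝓑^Y, μ_Y) be measurable, measure effectively proper (φ_*μ_X ≤ C·μ_Y), bornologous, and coarsely equivalent, with both measure spaces σ-finite and both coarse structures measurable with μ_X, μ_Y uniform. If c is a μ_X-Ponzi scheme on X (a μ_X-1 chain whose boundary ∂c is effective), then the pushforward φ_*c is a μ_Y-Ponzi scheme on Y. -/

import Mathlib

open MeasureTheory

/-- A coarse structure on `X` (Roe). -/
structure CoarseStructure (X : Type*) where
  sets : Set (Set (X × X))
  diag_mem : {p : X × X | p.1 = p.2} ∈ sets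
  subset_mem : ∀ E E' : Set (X × X), E' ∈ sets → E ⊆ E' → E ∈ sets
  union_mem : ∀ E₁ E₂ : Set (X × X), E₁ ∈ sets → E₂ ∈ sets → E₁ ∪ E₂ ∈ sets
  comp_mem : ∀ E₁ E₂ : Set (X × X), E₁ ∈ sets → E₂ ∈ sets →
    {p : X × X | ∃ y, (p.1, y) ∈ E₁ ∧ (y, p.2) ∈ E₂} ∈ sets
  transpose_mem : ∀ E : Set (X × X), E ∈ sets → {p : X × X | (p.2, p.1) ∈ E} ∈ sets

/-- The section `E_x = {y : (x,y) ∈ E}`. -/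
def relSec {X : Type*} (E : Set (X × X)) (x : X) : Set X := {y | (x, y) ∈ E}

/-- Pushforward of an entourage along a map. -/
def relPush {X Y : Type*} (φ : X → Y) (E : Set (X × X)) : Set (Y × Y) :=
  {q | ∃ x x' : X, (x, x') ∈ E ∧ q = (φ x, φ x')}

/-- A set is bounded if it is contained in a section of a controlled set. -/
def CoarseBounded {X : Type*} (𝓔 : CoarseStructure X) (B : Set X) : Prop :=
  ∃ E ∈ 𝓔.sets, ∃ x : X, B ⊆ relSec E x

/-- Two maps into a coarse space are close. -/
def CloseMaps {S X : Type*} (𝓔 : CoarseStructure X) (φ₁ φ₂ : S → X) : Prop :=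
  {p : X × X | ∃ s : S, p = (φ₁ s, φ₂ s)} ∈ 𝓔.sets

/-- The coarse structure `𝓔` is measurable. -/
def MeasurableCoarseStructure {X : Type*} [MeasurableSpace X]
    (𝓔 : CoarseStructure X) : Prop :=
  ∀ E ∈ 𝓔.sets, ∃ E' ∈ 𝓔.sets, MeasurableSet E' ∧ E ⊆ E'

/-- `μ` is a uniform measure: sections of measurable controlled sets have
uniformly bounded measure. -/
def UniformMeasure {X : Type*} [MeasurableSpace X] (𝓔 : CoarseStructure X)
    (μ : Measure X) : Prop :=
  ∀ E ∈ 𝓔.sets, MeasurableSet E → ∃ K : ENNReal, K ≠ ⊤ ∧ ∀ x : X, μ (relSec E x) ≤ K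

/-- A `μ`-1 chain: essentially bounded and vanishing a.e. outside a measurable
controlled set. -/
def IsMuOneChain {X : Type*} [MeasurableSpace X] (𝓔 : CoarseStructure X)
    (μ : Measure X) (c : X × X → ℝ) : Prop :=
  (∃ M : ℝ, ∀ᵐ p ∂(μ.prod μ), |c p| ≤ M) ∧
  ∃ E ∈ 𝓔.sets, MeasurableSet E ∧ ∀ᵐ p ∂(μ.prod μ), p ∉ E → c p = 0

/-- The integral boundary of a 1-chain. -/
noncomputable def boundaryX {X : Type*} [MeasurableSpace X] (μ : Measure X)
    (c : X × X → ℝ) (x : X) : ℝ :=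
  (∫ y, c (y, x) ∂μ) - ∫ y, c (x, y) ∂μ

/-- An effective `μ`-0 chain. -/
def IsEffective {X : Type*} [MeasurableSpace X] (𝓔 : CoarseStructure X)
    (μ : Measure X) (f : X → ℝ) : Prop :=
  (∀ᵐ x ∂μ, 0 ≤ f x) ∧
  ∃ E ∈ 𝓔.sets, MeasurableSet E ∧ ∀ x₀ : X, 1 ≤ ∫ x in relSec E x₀, f x ∂μ

/-- A `μ`-Ponzi scheme: a `μ`-1 chain with effective boundary. -/
def IsMuPS {X : Type*} [MeasurableSpace X] (𝓔 : CoarseStructure X)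
    (μ : Measure X) (c : X × X → ℝ) : Prop :=
  IsMuOneChain 𝓔 μ c ∧ IsEffective 𝓔 μ (boundaryX μ c)

section Helpers
variable {Z : Type*} [MeasurableSpace Z] {ν : Measure Z} [SigmaFinite ν]

/-- Integrability of `1_F(q) |g q.2|` when the transposed sections of `F` have
uniformly bounded measure. -/
lemma aux_integrable_snd (F : Set (Z × Z)) (hF : MeasurableSet F) (K : ENNReal) (hK : K ≠ ⊤)
    (hsec : ∀ w : Z, ν {z | (z, w) ∈ F} ≤ K)
    (g : Z → ℝ) (hg : Measurable g) (hgi : Integrable g ν) :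
    Integrable (fun q : Z × Z => F.indicator (fun p => |g p.2|) q) (ν.prod ν) := by
  have hmeas : Measurable (fun q : Z × Z => F.indicator (fun p => |g p.2|) q) :=
    ((hg.comp measurable_snd).abs).indicator hF
  refine ⟨hmeas.aestronglyMeasurable, ?_⟩
  rw [hasFiniteIntegral_def]
  have h1 : ∀ q : Z × Z, (‖F.indicator (fun p => |g p.2|) q‖₊ : ENNReal)
      = F.indicator (fun p => ((‖g p.2‖₊ : ENNReal))) q := by
    intro q
    by_cases hq : q ∈ F <;> simp [hq, Real.nnnorm_abs]
  calc ∫⁻ q, (‖F.indicator (fun p => |g p.2|) q‖₊ : ENNReal) ∂(ν.prod ν)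
      = ∫⁻ q, F.indicator (fun p => ((‖g p.2‖₊ : ENNReal))) q ∂(ν.prod ν) := by
        exact lintegral_congr h1
    _ = ∫⁻ w, ∫⁻ z, F.indicator (fun p => ((‖g p.2‖₊ : ENNReal))) (z, w) ∂ν ∂ν := by
        refine lintegral_prod_symm _ ?_
        exact (((hg.comp measurable_snd).nnnorm.coe_nnreal_ennreal).indicator hF).aemeasurable
    _ ≤ ∫⁻ w, (‖g w‖₊ : ENNReal) * K ∂ν := by
        refine lintegral_mono fun w => ?_
        have e : ∀ z, F.indicator (fun p => ((‖g p.2‖₊ : ENNReal))) (z, w)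
            = Set.indicator {z | (z, w) ∈ F} (fun _ => ((‖g w‖₊ : ENNReal))) z := by
          intro z
          by_cases hz : (z, w) ∈ F <;> simp [hz, Set.indicator, Set.mem_setOf_eq]
        have hms : MeasurableSet {z | (z, w) ∈ F} := measurable_prodMk_right hF
        rw [lintegral_congr e, lintegral_indicator hms _, setLIntegral_const]
        exact mul_le_mul_right (hsec w) _
    _ = (∫⁻ w, (‖g w‖₊ : ENNReal) ∂ν) * K := lintegral_mul_const _ hg.nnnorm.coe_nnreal_ennreal
    _ < ⊤ := ENNReal.mul_lt_top hgi.2 hK.lt_top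

/-- Integrability of `1_F(q) |g q.1|` when the sections of `F` have
uniformly bounded measure. -/
lemma aux_integrable_fst (F : Set (Z × Z)) (hF : MeasurableSet F) (K : ENNReal) (hK : K ≠ ⊤)
    (hsec : ∀ z : Z, ν {w | (z, w) ∈ F} ≤ K)
    (g : Z → ℝ) (hg : Measurable g) (hgi : Integrable g ν) :
    Integrable (fun q : Z × Z => F.indicator (fun p => |g p.1|) q) (ν.prod ν) := by
  have hmeas : Measurable (fun q : Z × Z => F.indicator (fun p => |g p.1|) q) :=
    ((hg.comp measurable_fst).abs).indicator hF
  refine ⟨hmeas.aestronglyMeasurable, ?_⟩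
  rw [hasFiniteIntegral_def]
  have h1 : ∀ q : Z × Z, (‖F.indicator (fun p => |g p.1|) q‖₊ : ENNReal)
      = F.indicator (fun p => ((‖g p.1‖₊ : ENNReal))) q := by
    intro q
    by_cases hq : q ∈ F <;> simp [hq, Real.nnnorm_abs]
  calc ∫⁻ q, (‖F.indicator (fun p => |g p.1|) q‖₊ : ENNReal) ∂(ν.prod ν)
      = ∫⁻ q, F.indicator (fun p => ((‖g p.1‖₊ : ENNReal))) q ∂(ν.prod ν) := by
        exact lintegral_congr h1
    _ = ∫⁻ z, ∫⁻ w, F.indicator (fun p => ((‖g p.1‖₊ : ENNReal))) (z, w) ∂ν ∂ν := by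
        refine lintegral_prod _ ?_
        exact (((hg.comp measurable_fst).nnnorm.coe_nnreal_ennreal).indicator hF).aemeasurable
    _ ≤ ∫⁻ z, (‖g z‖₊ : ENNReal) * K ∂ν := by
        refine lintegral_mono fun z => ?_
        have e : ∀ w, F.indicator (fun p => ((‖g p.1‖₊ : ENNReal))) (z, w)
            = Set.indicator {w | (z, w) ∈ F} (fun _ => ((‖g z‖₊ : ENNReal))) w := by
          intro w
          by_cases hw : (z, w) ∈ F <;> simp [hw, Set.indicator, Set.mem_setOf_eq]
        have hms : MeasurableSet {w | (z, w) ∈ F} := measurable_prodMk_left hF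
        rw [lintegral_congr e, lintegral_indicator hms _, setLIntegral_const]
        exact mul_le_mul_right (hsec z) _
    _ = (∫⁻ z, (‖g z‖₊ : ENNReal) ∂ν) * K := lintegral_mul_const _ hg.nnnorm.coe_nnreal_ennreal
    _ < ⊤ := ENNReal.mul_lt_top hgi.2 hK.lt_top

lemma integrable_mul_snd {d : Z × Z → ℝ} (hdm : Measurable d)
    {M : ℝ} (hM : ∀ᵐ q ∂(ν.prod ν), |d q| ≤ M)
    {F : Set (Z × Z)} (hF : MeasurableSet F)
    (hsupp : ∀ᵐ q ∂(ν.prod ν), q ∉ F → d q = 0)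
    {K : ENNReal} (hK : K ≠ ⊤) (hsec : ∀ w : Z, ν {z | (z, w) ∈ F} ≤ K)
    {g : Z → ℝ} (hg : Measurable g) (hgi : Integrable g ν) :
    Integrable (fun q : Z × Z => d q * g q.2) (ν.prod ν) := by
  have hb := (aux_integrable_snd F hF K hK hsec g hg hgi).const_mul (max M 0)
  refine Integrable.mono' hb
    ((hdm.mul (hg.comp measurable_snd)).aestronglyMeasurable) ?_
  filter_upwards [hM, hsupp] with q h1 h2
  by_cases hq : q ∈ F
  · rw [Set.indicator_of_mem hq, Real.norm_eq_abs, abs_mul]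
    exact mul_le_mul (h1.trans (le_max_left _ _)) le_rfl (abs_nonneg _) (le_max_right _ _)
  · simp [h2 hq, Set.indicator_of_notMem hq]

lemma integrable_mul_fst {d : Z × Z → ℝ} (hdm : Measurable d)
    {M : ℝ} (hM : ∀ᵐ q ∂(ν.prod ν), |d q| ≤ M)
    {F : Set (Z × Z)} (hF : MeasurableSet F)
    (hsupp : ∀ᵐ q ∂(ν.prod ν), q ∉ F → d q = 0)
    {K : ENNReal} (hK : K ≠ ⊤) (hsec : ∀ z : Z, ν {w | (z, w) ∈ F} ≤ K)
    {g : Z → ℝ} (hg : Measurable g) (hgi : Integrable g ν) :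
    Integrable (fun q : Z × Z => d q * g q.1) (ν.prod ν) := by
  have hb := (aux_integrable_fst F hF K hK hsec g hg hgi).const_mul (max M 0)
  refine Integrable.mono' hb
    ((hdm.mul (hg.comp measurable_fst)).aestronglyMeasurable) ?_
  filter_upwards [hM, hsupp] with q h1 h2
  by_cases hq : q ∈ F
  · rw [Set.indicator_of_mem hq, Real.norm_eq_abs, abs_mul]
    exact mul_le_mul (h1.trans (le_max_left _ _)) le_rfl (abs_nonneg _) (le_max_right _ _)
  · simp [h2 hq, Set.indicator_of_notMem hq]

lemma pairing {d : Z × Z → ℝ} {g : Z → ℝ}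
    (h1 : Integrable (fun q : Z × Z => d q * g q.2) (ν.prod ν))
    (h2 : Integrable (fun q : Z × Z => d q * g q.1) (ν.prod ν)) :
    ∫ q, d q * (g q.2 - g q.1) ∂(ν.prod ν) = ∫ z, boundaryX ν d z * g z ∂ν := by
  have i1 : Integrable (fun z => (∫ y, d (y, z) ∂ν) * g z) ν := by
    have := h1.integral_prod_right
    simpa only [integral_mul_const] using this
  have i2 : Integrable (fun z => (∫ y, d (z, y) ∂ν) * g z) ν := by
    have := h2.integral_prod_left
    simpa only [integral_mul_const] using this
  have e1 : ∫ q, d q * g q.2 ∂(ν.prod ν) = ∫ z, (∫ y, d (y, z) ∂ν) * g z ∂ν := by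
    rw [integral_prod_symm _ h1]
    simp only [integral_mul_const]
  have e2 : ∫ q, d q * g q.1 ∂(ν.prod ν) = ∫ z, (∫ y, d (z, y) ∂ν) * g z ∂ν := by
    rw [integral_prod _ h2]
    simp only [integral_mul_const]
  calc ∫ q, d q * (g q.2 - g q.1) ∂(ν.prod ν)
      = ∫ q, (d q * g q.2 - d q * g q.1) ∂(ν.prod ν) := by
        simp only [mul_sub]
    _ = (∫ q, d q * g q.2 ∂(ν.prod ν)) - ∫ q, d q * g q.1 ∂(ν.prod ν) :=
        integral_sub h1 h2
    _ = (∫ z, (∫ y, d (y, z) ∂ν) * g z ∂ν) - ∫ z, (∫ y, d (z, y) ∂ν) * g z ∂ν := by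
        rw [e1, e2]
    _ = ∫ z, ((∫ y, d (y, z) ∂ν) * g z - (∫ y, d (z, y) ∂ν) * g z) ∂ν :=
        (integral_sub i1 i2).symm
    _ = ∫ z, boundaryX ν d z * g z ∂ν := by
        unfold boundaryX
        simp only [sub_mul]

end Helpers

theorem pushforward_of_mu_PS {X Y : Type*} [MeasurableSpace X] [MeasurableSpace Y]
    (𝓔X : CoarseStructure X) (𝓔Y : CoarseStructure Y)
    (μX : Measure X) (μY : Measure Y) [SigmaFinite μX] [SigmaFinite μY]
    (hmX : MeasurableCoarseStructure 𝓔X) (hmY : MeasurableCoarseStructure 𝓔Y)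
    (huX : UniformMeasure 𝓔X μX) (huY : UniformMeasure 𝓔Y μY)
    (φ : X → Y) (hφmeas : Measurable φ)
    -- φ is measure effectively proper with constant C > 0
    (C : ℝ) (hC : 0 < C)
    (hmep : ∀ B : Set Y, MeasurableSet B → (μX.map φ) B ≤ ENNReal.ofReal C * μY B)
    -- φ is bornologous
    (hborn : ∀ E ∈ 𝓔X.sets, relPush φ E ∈ 𝓔Y.sets)
    -- φ is a coarse equivalence, with coarse inverse ψ
    (ψ : Y → X)
    (hψproper : ∀ B : Set X, CoarseBounded 𝓔X B → CoarseBounded 𝓔Y (ψ ⁻¹' B))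
    (hφψ : CloseMaps 𝓔Y (fun y => φ (ψ y)) id)
    (hψφ : CloseMaps 𝓔X (fun x => ψ (φ x)) id)
    -- c is a μX-Ponzi scheme on X
    (c : X × X → ℝ) (hcmeas : Measurable c) (hc : IsMuPS 𝓔X μX c) :
    -- then the pushforward φ_* c (characterized by duality) is a μY-Ponzi scheme
    ∀ d : Y × Y → ℝ, Measurable d →
      (∃ M : ℝ, ∀ᵐ q ∂(μY.prod μY), |d q| ≤ M) →
      (∀ g : Y × Y → ℝ, Integrable g (μY.prod μY) →
        ∫ q, d q * g q ∂(μY.prod μY) =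
          ∫ p, c p * g (φ p.1, φ p.2) ∂(μX.prod μX)) →
      IsMuPS 𝓔Y μY d := by

  -- unpack the Ponzi scheme structure of c
  obtain ⟨⟨⟨Mc, hMc⟩, E, hE, hEm, hEsupp⟩, hbc0, E₀, hE₀, hE₀m, hE₀eff⟩ := hc
  intro d hdmeas hdbd hdual
  obtain ⟨Md, hMd⟩ := hdbd
  -- the controlled support set F for d
  obtain ⟨F, hF𝓔, hFm, hFsub⟩ := hmY (relPush φ E) (hborn E hE)
  -- uniform section bounds for F
  obtain ⟨KF, hKF, hKFle⟩ := huY F hF𝓔 hFm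
  have hFt𝓔 : {p : Y × Y | (p.2, p.1) ∈ F} ∈ 𝓔Y.sets := 𝓔Y.transpose_mem F hF𝓔
  have hFtm : MeasurableSet {p : Y × Y | (p.2, p.1) ∈ F} := measurable_swap hFm
  obtain ⟨KF', hKF', hKF'le⟩ := huY _ hFt𝓔 hFtm
  have hFsec' : ∀ w : Y, μY {z | (z, w) ∈ F} ≤ KF' := fun w => by
    simpa [relSec] using hKF'le w
  have hFsec : ∀ z : Y, μY {w | (z, w) ∈ F} ≤ KF := fun z => by
    simpa [relSec] using hKFle z
  -- uniform section bounds for E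
  obtain ⟨KE, hKE, hKEle⟩ := huX E hE hEm
  have hEt𝓔 : {p : X × X | (p.2, p.1) ∈ E} ∈ 𝓔X.sets := 𝓔X.transpose_mem E hE
  have hEtm : MeasurableSet {p : X × X | (p.2, p.1) ∈ E} := measurable_swap hEm
  obtain ⟨KE', hKE', hKE'le⟩ := huX _ hEt𝓔 hEtm
  have hEsec' : ∀ w : X, μX {z | (z, w) ∈ E} ≤ KE' := fun w => by
    simpa [relSec] using hKE'le w
  have hEsec : ∀ z : X, μX {w | (z, w) ∈ E} ≤ KE := fun z => by
    simpa [relSec] using hKEle z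
  -- Step A : d vanishes a.e. outside F
  have hFc : MeasurableSet Fᶜ := hFm.compl
  have hdsupp : ∀ᵐ q ∂(μY.prod μY), q ∉ F → d q = 0 := by
    set ρ := (μY.prod μY).restrict Fᶜ with hρ
    have hint : ∀ s, MeasurableSet s → ρ s < ⊤ → IntegrableOn d s ρ := by
      intro s hs hsfin
      refine Integrable.mono' (g := fun _ => max Md 0) ?_
        (hdmeas.aestronglyMeasurable.restrict) ?_
      · refine integrable_const_iff.2 (Or.inr ?_)
        constructor
        rw [Measure.restrict_apply_univ]
        exact hsfin
      · refine ae_restrict_of_ae (ae_restrict_of_ae ?_)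
        filter_upwards [hMd] with q hq
        rw [Real.norm_eq_abs]
        exact hq.trans (le_max_left _ _)
    have hzero : ∀ s, MeasurableSet s → ρ s < ⊤ → ∫ q in s, d q ∂ρ = 0 := by
      intro s hs hsfin
      have hsF : MeasurableSet (s ∩ Fᶜ) := hs.inter hFc
      have hfin : (μY.prod μY) (s ∩ Fᶜ) < ⊤ := by
        rwa [hρ, Measure.restrict_apply hs] at hsfin
      set g : Y × Y → ℝ := (s ∩ Fᶜ).indicator (fun _ => 1) with hg
      have hgi : Integrable g (μY.prod μY) := by
        rw [hg, integrable_indicator_iff hsF]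
        exact integrableOn_const hfin.ne
      have hd1 : ∫ q in s, d q ∂ρ = ∫ q, d q * g q ∂(μY.prod μY) := by
        rw [hρ, Measure.restrict_restrict hs, ← integral_indicator hsF]
        refine integral_congr_ae (Filter.Eventually.of_forall fun q => ?_)
        by_cases hq : q ∈ s ∩ Fᶜ <;> simp [hg, hq]
      rw [hd1, hdual g hgi]
      refine integral_eq_zero_of_ae ?_
      filter_upwards [hEsupp] with p hp
      by_cases hpE : p ∈ E
      · have hmem : (φ p.1, φ p.2) ∈ F := hFsub ⟨p.1, p.2, hpE, rfl⟩
        have hnot : (φ p.1, φ p.2) ∉ s ∩ Fᶜ := fun hcon => hcon.2 hmem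
        simp [hg, Set.indicator_of_notMem hnot]
      · simp [hp hpE]
    have h1 : 0 ≤ᵐ[ρ] d :=
      ae_nonneg_of_forall_setIntegral_nonneg_of_sigmaFinite hint
        (fun s hs h => (hzero s hs h).ge)
    have h2 : 0 ≤ᵐ[ρ] (fun q => -d q) :=
      ae_nonneg_of_forall_setIntegral_nonneg_of_sigmaFinite
        (fun s hs h => (hint s hs h).neg)
        (fun s hs h => by rw [integral_neg, hzero s hs h, neg_zero])
    have h3 : ∀ᵐ q ∂ρ, d q = 0 := by
      filter_upwards [h1, h2] with q a b
      simp only [Pi.zero_apply] at a b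
      linarith
    have h4 := (ae_restrict_iff' hFc).1 h3
    filter_upwards [h4] with q hq hqF
    exact hq hqF
  -- integrability of pullbacks along φ
  have hgφint : ∀ g : Y → ℝ, Measurable g → Integrable g μY →
      Integrable (fun x => g (φ x)) μX := by
    intro g hg hgi
    refine ⟨(hg.comp hφmeas).aestronglyMeasurable, ?_⟩
    rw [hasFiniteIntegral_def]
    have hle : μX.map φ ≤ (ENNReal.ofReal C) • μY :=
      Measure.le_iff.2 (fun s hs => by simpa using hmep s hs)
    calc ∫⁻ x, (‖g (φ x)‖₊ : ENNReal) ∂μX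
        = ∫⁻ y, (‖g y‖₊ : ENNReal) ∂(μX.map φ) :=
          (lintegral_map hg.nnnorm.coe_nnreal_ennreal hφmeas).symm
      _ ≤ ∫⁻ y, (‖g y‖₊ : ENNReal) ∂((ENNReal.ofReal C) • μY) :=
          lintegral_mono' hle le_rfl
      _ = ENNReal.ofReal C * ∫⁻ y, (‖g y‖₊ : ENNReal) ∂μY :=
          lintegral_smul_measure _ _
      _ < ⊤ := ENNReal.mul_lt_top ENNReal.ofReal_lt_top hgi.2
  -- the bridge identity
  have hbridge : ∀ g : Y → ℝ, Measurable g → Integrable g μY →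
      ∫ y, boundaryX μY d y * g y ∂μY = ∫ x, boundaryX μX c x * g (φ x) ∂μX := by
    intro g hg hgi
    have h1 := integrable_mul_snd hdmeas hMd hFm hdsupp hKF' hFsec' hg hgi
    have h2 := integrable_mul_fst hdmeas hMd hFm hdsupp hKF hFsec hg hgi
    set gφ : X → ℝ := fun x => g (φ x) with hgφdef
    have hgφm : Measurable gφ := hg.comp hφmeas
    have hgφi : Integrable gφ μX := hgφint g hg hgi
    have h1x := integrable_mul_snd hcmeas hMc hEm hEsupp hKE' hEsec' hgφm hgφi
    have h2x := integrable_mul_fst hcmeas hMc hEm hEsupp hKE hEsec hgφm hgφi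
    set h : Y × Y → ℝ := F.indicator (fun q => g q.2 - g q.1) with hh
    have hhm : Measurable h :=
      ((hg.comp measurable_snd).sub (hg.comp measurable_fst)).indicator hFm
    have hhi : Integrable h (μY.prod μY) := by
      have hb := (aux_integrable_snd F hFm KF' hKF' hFsec' g hg hgi).add
        (aux_integrable_fst F hFm KF hKF hFsec g hg hgi)
      refine Integrable.mono' hb hhm.aestronglyMeasurable
        (Filter.Eventually.of_forall fun q => ?_)
      by_cases hq : q ∈ F
      · simp only [hh, Pi.add_apply, Set.indicator_of_mem hq, Real.norm_eq_abs,
          sub_eq_add_neg]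
        calc |g q.2 + -g q.1| ≤ |g q.2| + |-g q.1| := abs_add_le _ _
          _ = |g q.2| + |g q.1| := by rw [abs_neg]
      · simp [hh, Pi.add_apply, Set.indicator_of_notMem hq]
    calc ∫ y, boundaryX μY d y * g y ∂μY
        = ∫ q, d q * (g q.2 - g q.1) ∂(μY.prod μY) := (pairing h1 h2).symm
      _ = ∫ q, d q * h q ∂(μY.prod μY) := by
          refine integral_congr_ae ?_
          filter_upwards [hdsupp] with q hq
          by_cases hqF : q ∈ F
          · rw [hh, Set.indicator_of_mem hqF]
          · simp [hq hqF]
      _ = ∫ p, c p * h (φ p.1, φ p.2) ∂(μX.prod μX) := hdual h hhi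
      _ = ∫ p, c p * (gφ p.2 - gφ p.1) ∂(μX.prod μX) := by
          refine integral_congr_ae ?_
          filter_upwards [hEsupp] with p hp
          by_cases hpE : p ∈ E
          · have hmem : (φ p.1, φ p.2) ∈ F := hFsub ⟨p.1, p.2, hpE, rfl⟩
            rw [hh, Set.indicator_of_mem hmem]
          · simp [hp hpE]
      _ = ∫ x, boundaryX μX c x * gφ x ∂μX := pairing h1x h2x
  -- integrability of the boundaries on finite-measure sets
  have hbd_int : ∀ s : Set Y, MeasurableSet s → μY s < ⊤ →
      IntegrableOn (boundaryX μY d) s μY := by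
    intro s hs hsfin
    have hg : Measurable (s.indicator (fun _ => (1:ℝ))) := measurable_const.indicator hs
    have hgi : Integrable (s.indicator fun _ => (1:ℝ)) μY :=
      (integrable_indicator_iff hs).2 (integrableOn_const hsfin.ne)
    have h1 := integrable_mul_snd hdmeas hMd hFm hdsupp hKF' hFsec' hg hgi
    have h2 := integrable_mul_fst hdmeas hMd hFm hdsupp hKF hFsec hg hgi
    have iA : Integrable
        (fun y => (∫ z, d (z, y) ∂μY) * s.indicator (fun _ => (1:ℝ)) y) μY := by
      have := h1.integral_prod_right
      simpa only [integral_mul_const] using this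
    have iB : Integrable
        (fun y => (∫ z, d (y, z) ∂μY) * s.indicator (fun _ => (1:ℝ)) y) μY := by
      have := h2.integral_prod_left
      simpa only [integral_mul_const] using this
    have iAB : Integrable (fun y => (∫ z, d (z, y) ∂μY) * s.indicator (fun _ => (1:ℝ)) y
        - (∫ z, d (y, z) ∂μY) * s.indicator (fun _ => (1:ℝ)) y) μY := iA.sub iB
    have heq : (fun y => (∫ z, d (z, y) ∂μY) * s.indicator (fun _ => (1:ℝ)) y
        - (∫ z, d (y, z) ∂μY) * s.indicator (fun _ => (1:ℝ)) y)
        = s.indicator (boundaryX μY d) := by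
      funext y
      by_cases hy : y ∈ s <;> simp [boundaryX, hy]
    rw [heq] at iAB
    exact (integrable_indicator_iff hs).1 iAB
  have hbc_int : ∀ s : Set X, MeasurableSet s → μX s < ⊤ →
      IntegrableOn (boundaryX μX c) s μX := by
    intro s hs hsfin
    have hg : Measurable (s.indicator (fun _ => (1:ℝ))) := measurable_const.indicator hs
    have hgi : Integrable (s.indicator fun _ => (1:ℝ)) μX :=
      (integrable_indicator_iff hs).2 (integrableOn_const hsfin.ne)
    have h1 := integrable_mul_snd hcmeas hMc hEm hEsupp hKE' hEsec' hg hgi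
    have h2 := integrable_mul_fst hcmeas hMc hEm hEsupp hKE hEsec hg hgi
    have iA : Integrable
        (fun y => (∫ z, c (z, y) ∂μX) * s.indicator (fun _ => (1:ℝ)) y) μX := by
      have := h1.integral_prod_right
      simpa only [integral_mul_const] using this
    have iB : Integrable
        (fun y => (∫ z, c (y, z) ∂μX) * s.indicator (fun _ => (1:ℝ)) y) μX := by
      have := h2.integral_prod_left
      simpa only [integral_mul_const] using this
    have iAB : Integrable (fun y => (∫ z, c (z, y) ∂μX) * s.indicator (fun _ => (1:ℝ)) y
        - (∫ z, c (y, z) ∂μX) * s.indicator (fun _ => (1:ℝ)) y) μX := iA.sub iB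
    have heq : (fun y => (∫ z, c (z, y) ∂μX) * s.indicator (fun _ => (1:ℝ)) y
        - (∫ z, c (y, z) ∂μX) * s.indicator (fun _ => (1:ℝ)) y)
        = s.indicator (boundaryX μX c) := by
      funext y
      by_cases hy : y ∈ s <;> simp [boundaryX, hy]
    rw [heq] at iAB
    exact (integrable_indicator_iff hs).1 iAB
  -- rewriting set integrals through indicators
  have hsetint : ∀ s : Set Y, MeasurableSet s →
      ∫ y in s, boundaryX μY d y ∂μY
        = ∫ y, boundaryX μY d y * s.indicator (fun _ => (1:ℝ)) y ∂μY := by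
    intro s hs
    rw [← integral_indicator hs]
    refine integral_congr_ae (Filter.Eventually.of_forall fun y => ?_)
    by_cases hy : y ∈ s <;> simp [hy]
  -- Step B : the boundary of d is a.e. nonnegative
  have hbd0 : ∀ᵐ y ∂μY, 0 ≤ boundaryX μY d y := by
    have key : 0 ≤ᵐ[μY] boundaryX μY d := by
      apply ae_nonneg_of_forall_setIntegral_nonneg_of_sigmaFinite hbd_int
      intro s hs hsfin
      have hgi : Integrable (s.indicator fun _ => (1:ℝ)) μY :=
        (integrable_indicator_iff hs).2 (integrableOn_const hsfin.ne)
      rw [hsetint s hs, hbridge _ (measurable_const.indicator hs) hgi]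
      refine integral_nonneg_of_ae ?_
      filter_upwards [hbc0] with x hx
      by_cases hxs : φ x ∈ s
      · simpa [hxs] using hx
      · simp [hxs]
    filter_upwards [key] with y hy
    simpa using hy
  -- construct the controlled set G witnessing effectiveness on Y
  have hS : {p : Y × Y | ∃ s, p = ((fun y => φ (ψ y)) s, id s)} ∈ 𝓔Y.sets := hφψ
  have hSt := 𝓔Y.transpose_mem _ hS
  have hP := hborn E₀ hE₀
  have hcomp := 𝓔Y.comp_mem _ _ hSt hP
  have hG₀ : {q : Y × Y | ∃ x' : X, (ψ q.1, x') ∈ E₀ ∧ q.2 = φ x'} ∈ 𝓔Y.sets := by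
    refine 𝓔Y.subset_mem _ _ hcomp ?_
    rintro ⟨y, y'⟩ ⟨x', hx', h2⟩
    simp only at h2
    subst h2
    exact ⟨φ (ψ y), ⟨y, rfl⟩, ⟨ψ y, x', hx', rfl⟩⟩
  obtain ⟨G, hG𝓔, hGm, hGsub⟩ := hmY _ hG₀
  obtain ⟨KG, hKG, hKGle⟩ := huY G hG𝓔 hGm
  -- assemble
  refine ⟨⟨⟨Md, hMd⟩, F, hF𝓔, hFm, hdsupp⟩, hbd0, G, hG𝓔, hGm, ?_⟩
  intro y0
  have hsm : MeasurableSet (relSec G y0) := measurable_prodMk_left hGm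
  have hsfin : μY (relSec G y0) < ⊤ := (hKGle y0).trans_lt hKG.lt_top
  have hgi : Integrable ((relSec G y0).indicator fun _ => (1:ℝ)) μY :=
    (integrable_indicator_iff hsm).2 (integrableOn_const hsfin.ne)
  have hpre_m : MeasurableSet (φ ⁻¹' relSec G y0) := hφmeas hsm
  have e1 : ∫ y in relSec G y0, boundaryX μY d y ∂μY
      = ∫ x in φ ⁻¹' relSec G y0, boundaryX μX c x ∂μX := by
    rw [hsetint _ hsm, hbridge _ (measurable_const.indicator hsm) hgi,
      ← integral_indicator hpre_m]
    refine integral_congr_ae (Filter.Eventually.of_forall fun x => ?_)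
    by_cases hx : φ x ∈ relSec G y0
    · simp [hx, Set.indicator_of_mem, Set.mem_preimage]
    · have hx' : x ∉ φ ⁻¹' relSec G y0 := hx
      simp [Set.indicator_of_notMem hx, Set.indicator_of_notMem hx']
  have hpre_fin : μX (φ ⁻¹' relSec G y0) < ⊤ := by
    have h5 := hmep (relSec G y0) hsm
    rw [Measure.map_apply hφmeas hsm] at h5
    exact lt_of_le_of_lt (h5.trans (mul_le_mul_right (hKGle y0) _))
      (ENNReal.mul_lt_top ENNReal.ofReal_lt_top hKG.lt_top)
  have hIO : IntegrableOn (boundaryX μX c) (φ ⁻¹' relSec G y0) μX :=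
    hbc_int _ hpre_m hpre_fin
  have hsub : relSec E₀ (ψ y0) ⊆ φ ⁻¹' relSec G y0 := by
    intro x' hx'
    exact hGsub ⟨x', hx', rfl⟩
  calc (1:ℝ) ≤ ∫ x in relSec E₀ (ψ y0), boundaryX μX c x ∂μX := hE₀eff (ψ y0)
    _ ≤ ∫ x in φ ⁻¹' relSec G y0, boundaryX μX c x ∂μX := by
        refine setIntegral_mono_set hIO ?_ hsub.eventuallyLE
        exact (ae_restrict_of_ae hbc0).mono fun x h => by simpa using h
    _ = ∫ y in relSec G y0, boundaryX μY d y ∂μY := e1.symm
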